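/- Let k ≥ 1, p > 1 and M > 0. There exists a constant c = c(k,p,M) > 0 such that for all z, η ∈ ℝ^k with |η| ≤ M the following hold: if |z − η| > 1 then |z − η|^{p} ≤ c |V_p(z) − V_p(η)|², and if |z − η| ≤ 1 then |z − η|² ≤ c |V_p(z) − V_p(η)|². -/

import Mathlib

noncomputable def Vp (p : ℝ) {E : Type*} [NormedAddCommGroup E] [NormedSpace ℝ E] (z : E) : E :=
  ((1 + ‖z‖ ^ 2) ^ ((p - 2) / 4)) • z

open Real

-- arithmetic bound for the derivative
lemma deriv_bound (p R α N mm d : ℝ) (hp : 1 < p) (hα : α = (p-2)/4) (hN0 : 0 ≤ N)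
    (hNR : N ≤ R^2) (hCS : mm^2 ≤ N*d) (hd0 : 0 ≤ d) :
    min 1 (p/2) * min 1 ((1+R^2)^α) * d ≤ (1+N)^(α-1) * (2*α*mm^2 + (1+N)*d) := by
  have hposn : (0:ℝ) < 1 + N := by linarith
  have hsplit : (1+N)^α = (1+N)^(α-1) * (1+N) := by
    rw [← Real.rpow_add_one hposn.ne']; ring_nf
  have hp1 : 0 < (1+N)^(α-1) := Real.rpow_pos_of_pos hposn _
  have hRpos : (0:ℝ) < (1+R^2)^α := Real.rpow_pos_of_pos (by positivity) _
  have h12 : min 1 (p/2) ≤ p/2 := min_le_right _ _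
  have h13 : min 1 ((1+R^2)^α) ≤ (1+R^2)^α := min_le_right _ _
  have h14 : (0:ℝ) ≤ min 1 ((1+R^2)^α) := le_min zero_le_one hRpos.le
  have h15 : (0:ℝ) ≤ min 1 (p/2) := le_min zero_le_one (by linarith)
  have h16 : min 1 (p/2) ≤ 1 := min_le_left _ _
  have h17 : min 1 ((1+R^2)^α) ≤ 1 := min_le_left _ _
  rcases le_or_gt 0 α with hα0 | hα0
  · have e3 : (1:ℝ) ≤ (1+N)^α := Real.one_le_rpow (by linarith) hα0
    have h10 : 0 ≤ 2*α*mm^2 := by positivity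
    have : min 1 (p/2) * min 1 ((1+R^2)^α) * d ≤ (1+N)^(α-1) * ((1+N)*d) := by
      have he : (1+N)^(α-1) * ((1+N)*d) = (1+N)^α * d := by rw [hsplit]; ring
      rw [he]
      calc min 1 (p/2) * min 1 ((1+R^2)^α) * d ≤ 1 * d := by
            apply mul_le_mul_of_nonneg_right _ hd0
            nlinarith
        _ ≤ (1+N)^α * d := by rw [one_mul]; nlinarith
    nlinarith
  · have hp2 : p < 2 := by rw [hα] at hα0; linarith
    have e1 : 2*α*(N*d) ≤ 2*α*mm^2 := by nlinarith
    have e2 : (p/2) * ((1+N) * d) ≤ 2*α*(N*d) + (1+N)*d := by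
      have h11 : 2*α = p/2 - 1 := by rw [hα]; ring
      rw [h11]; nlinarith
    have e3 : (1+R^2)^α ≤ (1+N)^α :=
      Real.rpow_le_rpow_of_nonpos hposn (by linarith) hα0.le
    have e4 : (1+N)^(α-1) * ((1+N) * d) = (1+N)^α * d := by rw [hsplit]; ring
    calc min 1 (p/2) * min 1 ((1+R^2)^α) * d ≤ (p/2) * ((1+R^2)^α * d) := by
          have := mul_le_mul h12 h13 h14 (by linarith : (0:ℝ) ≤ p/2)
          nlinarith
      _ ≤ (p/2) * ((1+N)^α * d) := by
          have : (0:ℝ) < p/2 := by linarith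
          gcongr
      _ = (1+N)^(α-1) * ((p/2) * ((1+N) * d)) := by rw [← e4]; ring
      _ ≤ (1+N)^(α-1) * (2*α*(N*d) + (1+N)*d) := by gcongr
      _ ≤ (1+N)^(α-1) * (2*α*mm^2 + (1+N)*d) := by gcongr

-- derivative of the scalar function
lemma phi_deriv (α a b d : ℝ) (hpos : ∀ t : ℝ, (0:ℝ) < 1 + (a+2*b*t+d*t^2)) (t : ℝ) :
    HasDerivAt (fun t => (1+(a+2*b*t+d*t^2))^α * (b+d*t))
      ((1+(a+2*b*t+d*t^2))^(α-1) * (2*α*(b+d*t)^2 + (1+(a+2*b*t+d*t^2))*d)) t := by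
  have h1 : HasDerivAt (fun t : ℝ => 1+(a+2*b*t+d*t^2)) (2*b + d*(2*t)) t := by
    have h0 := (((hasDerivAt_const t a).add ((hasDerivAt_id t).const_mul (2*b))).add
        ((hasDerivAt_pow 2 t).const_mul d)).const_add (1:ℝ)
    simp only [id] at h0
    refine h0.congr_deriv ?_
    push_cast
    ring
  have h3 := h1.rpow_const (p := α) (Or.inl (hpos t).ne')
  have h4 : HasDerivAt (fun t : ℝ => b + d*t) (0 + d*1) t :=
    (hasDerivAt_const t b).add ((hasDerivAt_id t).const_mul d)
  have h5 := h3.mul h4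
  refine h5.congr_deriv ?_
  have hsplit : (1+(a+2*b*t+d*t^2))^α = (1+(a+2*b*t+d*t^2))^(α-1) * (1+(a+2*b*t+d*t^2)) := by
    rw [← Real.rpow_add_one (hpos t).ne']; ring_nf
  rw [hsplit]
  ring

-- mean value lower bound
lemma mvt_lower (φ φ' : ℝ → ℝ) (K : ℝ) (hd : ∀ t : ℝ, HasDerivAt φ (φ' t) t)
    (hb : ∀ t ∈ Set.Icc (0:ℝ) 1, K ≤ φ' t) : K ≤ φ 1 - φ 0 := by
  have hψd : ∀ t : ℝ, HasDerivAt (fun t => φ t - K*t) (φ' t - K) t := by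
    intro t
    have := (hd t).sub ((hasDerivAt_id t).const_mul K)
    exact this.congr_deriv (by ring)
  have hmono : MonotoneOn (fun t => φ t - K*t) (Set.Icc (0:ℝ) 1) := by
    apply monotoneOn_of_deriv_nonneg (convex_Icc 0 1)
    · exact fun t _ => ((hψd t).differentiableAt.continuousAt).continuousWithinAt
    · exact fun t _ => (hψd t).differentiableAt.differentiableWithinAt
    · intro t ht
      rw [(hψd t).deriv]
      rw [interior_Icc] at ht
      have := hb t ⟨ht.1.le, ht.2.le⟩
      linarith
  have := hmono (Set.mem_Icc.2 ⟨le_refl 0, zero_le_one⟩)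
    (Set.mem_Icc.2 ⟨zero_le_one, le_refl 1⟩) zero_le_one
  simp only at this
  linarith

variable {E : Type*} [NormedAddCommGroup E] [InnerProductSpace ℝ E]

lemma norm_Vp (p : ℝ) (x : E) : ‖Vp p x‖ = (1 + ‖x‖ ^ 2) ^ ((p-2)/4) * ‖x‖ := by
  have h1 : (0:ℝ) < 1 + ‖x‖ ^ 2 := by positivity
  rw [Vp, norm_smul, Real.norm_eq_abs, abs_of_pos (Real.rpow_pos_of_pos h1 _)]

lemma Vp_lower (p : ℝ) (hp : 1 < p) (x : E) (hx : 1 ≤ ‖x‖) :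
    (1/2) * ‖x‖^(p/2) ≤ ‖Vp p x‖ := by
  set t := ‖x‖ with ht
  have ht0 : (0:ℝ) < t := lt_of_lt_of_le one_pos hx
  rw [norm_Vp]
  obtain ⟨α, hα⟩ : ∃ α : ℝ, α = (p-2)/4 := ⟨_, rfl⟩
  rw [← hα]
  have hsq : (t^2 : ℝ) = t ^ (2:ℝ) := by
    rw [← Real.rpow_natCast t 2]; norm_num
  have hkey : t^(p/2) = t^(2*α) * t := by
    rw [← Real.rpow_add_one ht0.ne']
    congr 1
    rw [hα]; ring
  rw [hkey]
  have hmain : (1/2) * t^(2*α) ≤ (1+t^2)^α := by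
    have ht2 : (t^2 : ℝ) ^ α = t ^ (2*α) := by
      rw [hsq, ← Real.rpow_mul ht0.le]
    rcases le_or_gt 0 α with hα0 | hα0
    · have : (t^2:ℝ)^α ≤ (1+t^2)^α := by
        apply Real.rpow_le_rpow (by positivity) (by linarith) hα0
      rw [ht2] at this
      have htp : 0 < t^(2*α) := Real.rpow_pos_of_pos ht0 _
      nlinarith
    · have h1 : (1+t^2:ℝ) ≤ 2*t^2 := by nlinarith
      have h2 : ((2:ℝ)*t^2)^α ≤ (1+t^2)^α :=
        Real.rpow_le_rpow_of_nonpos (by positivity) h1 hα0.le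
      have h3 : ((2:ℝ)*t^2)^α = 2^α * t^(2*α) := by
        rw [Real.mul_rpow (by norm_num) (by positivity), ht2]
      have h4 : (1/2 : ℝ) ≤ 2^α := by
        have hm1 : (-1:ℝ) ≤ α := by rw [hα]; linarith
        have := Real.rpow_le_rpow_of_exponent_le (by norm_num : (1:ℝ) ≤ 2) hm1
        rw [Real.rpow_neg_one] at this
        linarith
      have htp : 0 < t^(2*α) := Real.rpow_pos_of_pos ht0 _
      nlinarith
  have htp2 : 0 < t^(2*α) := Real.rpow_pos_of_pos ht0 _
  nlinarith

lemma Vp_upper (p M : ℝ) (hM : 0 < M) (x : E) (hx : ‖x‖ ≤ M) :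
    ‖Vp p x‖ ≤ (1+M^2)^(|(p-2)/4|) * M := by
  rw [norm_Vp]
  obtain ⟨α, hα⟩ : ∃ α : ℝ, α = (p-2)/4 := ⟨_, rfl⟩
  rw [← hα]
  have hM1 : (1:ℝ) ≤ 1 + M^2 := by nlinarith
  have hb : (1+‖x‖^2 : ℝ) ^ α ≤ (1+M^2)^(|α|) := by
    rcases le_or_gt 0 α with hα0 | hα0
    · rw [abs_of_nonneg hα0]
      apply Real.rpow_le_rpow (by positivity) _ hα0
      have := pow_le_pow_left₀ (norm_nonneg x) hx 2
      linarith
    · calc (1+‖x‖^2 : ℝ) ^ α ≤ 1 := Real.rpow_le_one_of_one_le_of_nonpos (by nlinarith [sq_nonneg ‖x‖]) hα0.le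
        _ ≤ (1+M^2)^(|α|) := Real.one_le_rpow hM1 (abs_nonneg α)
  have h2 : (0:ℝ) < (1+‖x‖^2 : ℝ) ^ α := Real.rpow_pos_of_pos (by positivity) _
  have h3 : (0:ℝ) ≤ (1+M^2 : ℝ)^(|α|) := by positivity
  have := mul_le_mul hb hx (norm_nonneg x) h3
  linarith

lemma far_lower (p T K : ℝ) (hp : 1 < p) (hK : 0 ≤ K) (hT1 : 1 ≤ T)
    (hTK : 4*K+4 ≤ T^(p/2)) (z η : E) (hη : ‖Vp p η‖ ≤ K) (hzT : T ≤ ‖z‖) :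
    1 ≤ ‖Vp p z - Vp p η‖ ∧ ‖z‖^p ≤ 16*‖Vp p z - Vp p η‖^2 := by
  have hz1 : (1:ℝ) ≤ ‖z‖ := le_trans hT1 hzT
  have hz0 : (0:ℝ) < ‖z‖ := lt_of_lt_of_le one_pos hz1
  have h1 := Vp_lower p hp z hz1
  have h3 : T^(p/2) ≤ ‖z‖^(p/2) := Real.rpow_le_rpow (by linarith) hzT (by linarith)
  have hS : ‖Vp p z‖ - ‖Vp p η‖ ≤ ‖Vp p z - Vp p η‖ := norm_sub_norm_le _ _
  have hX0 : (0:ℝ) < ‖z‖^(p/2) := Real.rpow_pos_of_pos hz0 _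
  have hS1 : (1/4) * ‖z‖^(p/2) + 1 ≤ ‖Vp p z - Vp p η‖ := by linarith
  constructor
  · linarith
  · have hXsq : (‖z‖^(p/2))^2 = ‖z‖^p := by
      rw [sq, ← Real.rpow_add hz0]; congr 1; ring
    have hSnn : (0:ℝ) ≤ ‖Vp p z - Vp p η‖ := norm_nonneg _
    nlinarith

lemma mono_lower (p R : ℝ) (hp : 1 < p) (z η : E) (hz : ‖z‖ ≤ R) (hη : ‖η‖ ≤ R) :
    (min 1 (p/2) * min 1 ((1+R^2) ^ ((p-2)/4))) * ‖z - η‖ ≤ ‖Vp p z - Vp p η‖ := by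
  have hα : (p-2)/4 = (p-2)/4 := rfl
  obtain ⟨α, hα⟩ : ∃ α : ℝ, α = (p-2)/4 := ⟨_, rfl⟩
  obtain ⟨a, ha⟩ : ∃ a : ℝ, a = ‖η‖^2 := ⟨_, rfl⟩
  obtain ⟨b, hb⟩ : ∃ b : ℝ, b = (inner ℝ η (z - η) : ℝ) := ⟨_, rfl⟩
  obtain ⟨d, hd⟩ : ∃ d : ℝ, d = ‖z - η‖^2 := ⟨_, rfl⟩
  obtain ⟨c₀, hc₀⟩ : ∃ c₀ : ℝ, c₀ = min 1 (p/2) * min 1 ((1+R^2) ^ α) := ⟨_, rfl⟩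
  have hnval : ∀ t : ℝ, a+2*b*t+d*t^2 = ‖η + t • (z - η)‖^2 := by
    intro t
    rw [norm_add_sq_real, real_inner_smul_right, norm_smul, Real.norm_eq_abs, mul_pow, sq_abs,
      ha, hb, hd]
    ring
  have hmval : ∀ t : ℝ, b + d*t = (inner ℝ (η + t • (z - η)) (z - η) : ℝ) := by
    intro t
    rw [inner_add_left, real_inner_smul_left, real_inner_self_eq_norm_sq, hb, hd]
    ring
  have hN0 : ∀ t : ℝ, 0 ≤ a+2*b*t+d*t^2 := fun t => by rw [hnval]; positivity
  have hpos : ∀ t : ℝ, (0:ℝ) < 1 + (a+2*b*t+d*t^2) := fun t => by have := hN0 t; linarith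
  have hCS : ∀ t : ℝ, (b+d*t)^2 ≤ (a+2*b*t+d*t^2)*d := by
    intro t
    rw [hnval t, hmval t, hd]
    have h1 := real_inner_mul_inner_self_le (η + t • (z - η)) (z - η)
    rw [real_inner_self_eq_norm_sq, real_inner_self_eq_norm_sq] at h1
    nlinarith
  have hd0 : 0 ≤ d := by rw [hd]; positivity
  have hNR : ∀ t ∈ Set.Icc (0:ℝ) 1, a+2*b*t+d*t^2 ≤ R^2 := by
    intro t ht
    rw [hnval]
    have h7 : η + t • (z - η) = (1-t) • η + t • z := by module
    have h8 : ‖η + t • (z - η)‖ ≤ R := by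
      rw [h7]
      calc ‖(1-t) • η + t • z‖ ≤ ‖(1-t) • η‖ + ‖t • z‖ := norm_add_le _ _
        _ = |1-t| * ‖η‖ + |t| * ‖z‖ := by
            rw [norm_smul, norm_smul, Real.norm_eq_abs, Real.norm_eq_abs]
        _ = (1-t) * ‖η‖ + t * ‖z‖ := by
            rw [abs_of_nonneg (by linarith [ht.2] : (0:ℝ) ≤ 1 - t), abs_of_nonneg ht.1]
        _ ≤ (1-t) * R + t * R := by
            have h9 : (0:ℝ) ≤ 1 - t := by linarith [ht.2]
            have := ht.1
            gcongr
        _ = R := by ring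
    have hRnn : 0 ≤ R := le_trans (norm_nonneg η) hη
    nlinarith [norm_nonneg (η + t • (z - η))]
  have hkey : c₀ * d ≤ (1+(a+2*b*1+d*1^2))^α * (b+d*1) - (1+(a+2*b*0+d*0^2))^α * (b+d*0) := by
    have := mvt_lower (fun t => (1+(a+2*b*t+d*t^2))^α * (b+d*t))
      (fun t => (1+(a+2*b*t+d*t^2))^(α-1) * (2*α*(b+d*t)^2 + (1+(a+2*b*t+d*t^2))*d))
      (c₀*d) (phi_deriv α a b d hpos)
      (fun t ht => by
        rw [hc₀]
        exact deriv_bound p R α _ _ d hp hα (hN0 t) (hNR t ht) (hCS t) hd0)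
    simpa using this
  have hφ1 : (1+(a+2*b*1+d*1^2))^α * (b+d*1) = (inner ℝ (Vp p z) (z - η) : ℝ) := by
    have hz1 : η + (1:ℝ) • (z - η) = z := by module
    have h1 : a+2*b*1+d*1^2 = ‖z‖^2 := by rw [hnval, hz1]
    have h2 : b+d*1 = (inner ℝ z (z - η) : ℝ) := by rw [hmval, hz1]
    rw [h1, h2, Vp, real_inner_smul_left, hα]
  have hφ0 : (1+(a+2*b*0+d*0^2))^α * (b+d*0) = (inner ℝ (Vp p η) (z - η) : ℝ) := by
    have hz0 : η + (0:ℝ) • (z - η) = η := by module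
    have h1 : a+2*b*0+d*0^2 = ‖η‖^2 := by rw [hnval, hz0]
    have h2 : b+d*0 = (inner ℝ η (z - η) : ℝ) := by rw [hmval, hz0]
    rw [h1, h2, Vp, real_inner_smul_left, hα]
  have hinner : c₀ * d ≤ (inner ℝ (Vp p z - Vp p η) (z - η) : ℝ) := by
    rw [inner_sub_left]
    rw [hφ1, hφ0] at hkey
    exact hkey
  have hfinal : c₀ * d ≤ ‖Vp p z - Vp p η‖ * ‖z - η‖ :=
    le_trans hinner (real_inner_le_norm _ _)
  have hc₀pos : 0 < c₀ := by
    rw [hc₀]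
    apply mul_pos <;> apply lt_min one_pos
    · linarith
    · positivity
  rw [← hα, ← hc₀]
  rcases eq_or_lt_of_le (norm_nonneg (z - η)) with h0 | h0
  · rw [← h0, mul_zero]
    exact norm_nonneg _
  · rw [hd] at hfinal
    nlinarith [norm_nonneg (Vp p z - Vp p η)]

theorem stmt_10 (k : ℕ) (hk : 1 ≤ k) (p : ℝ) (hp : 1 < p) (M : ℝ) (hM : 0 < M) :
    ∃ c : ℝ, 0 < c ∧ ∀ z η : EuclideanSpace ℝ (Fin k), ‖η‖ ≤ M →
      (1 < ‖z - η‖ → ‖z - η‖ ^ p ≤ c * ‖Vp p z - Vp p η‖ ^ 2) ∧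
      (‖z - η‖ ≤ 1 → ‖z - η‖ ^ 2 ≤ c * ‖Vp p z - Vp p η‖ ^ 2) := by
  obtain ⟨K, hKdef⟩ : ∃ K : ℝ, K = (1+M^2)^(|(p-2)/4|) * M := ⟨_, rfl⟩
  have hK0 : 0 ≤ K := by rw [hKdef]; positivity
  obtain ⟨T, hTdef⟩ : ∃ T : ℝ, T = max (max 1 (2*M)) ((4*K+4)^((p/2)⁻¹)) := ⟨_, rfl⟩
  have hp0 : (0:ℝ) < p := by linarith
  have hT1 : (1:ℝ) ≤ T := hTdef ▸ le_trans (le_max_left 1 (2*M)) (le_max_left _ _)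
  have hT0 : (0:ℝ) < T := lt_of_lt_of_le one_pos hT1
  have hTM : 2*M ≤ T := hTdef ▸ le_trans (le_max_right 1 (2*M)) (le_max_left _ _)
  have hTK : 4*K+4 ≤ T^(p/2) := by
    have h1 : ((4*K+4 : ℝ)^((p/2)⁻¹))^(p/2) = 4*K+4 := by
      rw [← Real.rpow_mul (by linarith : (0:ℝ) ≤ 4*K+4),
        inv_mul_cancel₀ (by linarith : (p:ℝ)/2 ≠ 0), Real.rpow_one]
    have h2 : (4*K+4 : ℝ)^((p/2)⁻¹) ≤ T :=
      hTdef ▸ le_trans (le_max_right _ _) (le_refl _)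
    calc (4*K+4 : ℝ) = ((4*K+4 : ℝ)^((p/2)⁻¹))^(p/2) := h1.symm
      _ ≤ T^(p/2) := Real.rpow_le_rpow (Real.rpow_nonneg (by linarith) _) h2 (by linarith)
  obtain ⟨c₀, hc₀def⟩ : ∃ c₀ : ℝ, c₀ = min 1 (p/2) * min 1 ((1+T^2) ^ ((p-2)/4)) := ⟨_, rfl⟩
  have hc₀pos : 0 < c₀ := by
    rw [hc₀def]
    apply mul_pos <;> apply lt_min one_pos
    · linarith
    · positivity
  obtain ⟨u, hudef⟩ : ∃ u : ℝ, u = (c₀^2)⁻¹ := ⟨_, rfl⟩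
  have hu0 : 0 < u := by rw [hudef]; positivity
  obtain ⟨A, hAdef⟩ : ∃ A : ℝ, A = (2*T)^p := ⟨_, rfl⟩
  have hA0 : 0 ≤ A := by rw [hAdef]; exact Real.rpow_nonneg (by linarith) _
  obtain ⟨B, hBdef⟩ : ∃ B : ℝ, B = (2:ℝ)^p := ⟨_, rfl⟩
  have hB0 : 0 ≤ B := by rw [hBdef]; exact Real.rpow_nonneg (by norm_num) _
  refine ⟨(1+A)*u + 16*(1+B) + 16, by positivity, ?_⟩
  intro z η hη
  obtain ⟨c, hcdef⟩ : ∃ c : ℝ, c = (1+A)*u + 16*(1+B) + 16 := ⟨_, rfl⟩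
  rw [← hcdef]
  obtain ⟨D, hDdef⟩ : ∃ D : ℝ, D = ‖z - η‖ := ⟨_, rfl⟩
  obtain ⟨S, hSdef⟩ : ∃ S : ℝ, S = ‖Vp p z - Vp p η‖ := ⟨_, rfl⟩
  have hD0 : 0 ≤ D := hDdef ▸ norm_nonneg _
  have hS0 : 0 ≤ S := hSdef ▸ norm_nonneg _
  rw [← hDdef, ← hSdef]
  rcases le_or_gt ‖z‖ T with hzT | hzT
  · -- near case
    have hml : c₀ * D ≤ S := by
      rw [hc₀def, hDdef, hSdef]
      exact mono_lower p T hp z η hzT (by linarith)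
    have hD2 : D^2 ≤ u * S^2 := by
      rw [hudef]
      rw [le_inv_mul_iff₀ (by positivity)]
      nlinarith [mul_le_mul hml hml (by positivity : (0:ℝ) ≤ c₀ * D) hS0]
    have hDle : D ≤ 2*T := by
      rw [hDdef]
      calc ‖z - η‖ ≤ ‖z‖ + ‖η‖ := norm_sub_le _ _
        _ ≤ T + M := by linarith
        _ ≤ 2*T := by linarith
    clear hDdef hSdef hzT hη z η
    constructor
    · intro hD1
      have h1 : D^p ≤ A := by
        rw [hAdef]; exact Real.rpow_le_rpow hD0 hDle hp0.le
      have h2 : (1:ℝ) ≤ D^2 := by nlinarith [hD1]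
      have hAuc : A*u ≤ c := by
        rw [hcdef]; linarith [hu0.le, hB0]
      calc D^p ≤ A := h1
        _ ≤ A * D^2 := le_mul_of_one_le_right hA0 h2
        _ ≤ A * (u * S^2) := mul_le_mul_of_nonneg_left hD2 hA0
        _ = (A*u) * S^2 := by ring
        _ ≤ c * S^2 := mul_le_mul_of_nonneg_right hAuc (sq_nonneg S)
    · intro hD1
      have huc : u ≤ c := by
        rw [hcdef]; linarith [mul_nonneg hA0 hu0.le, hB0]
      calc D^2 ≤ u * S^2 := hD2
        _ ≤ c * S^2 := mul_le_mul_of_nonneg_right huc (sq_nonneg S)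
  · -- far case
    have hKb : ‖Vp p η‖ ≤ K := hKdef ▸ Vp_upper p M hM η hη
    obtain ⟨hf1, hf2⟩ := far_lower p T K hp hK0 hT1 hTK z η hKb hzT.le
    rw [← hSdef] at hf1 hf2
    obtain ⟨X, hXdef⟩ : ∃ X : ℝ, X = ‖z‖ := ⟨_, rfl⟩
    rw [← hXdef] at hf2
    have hX0 : (0:ℝ) < X := by rw [hXdef]; linarith
    have hDle : D ≤ 2*X := by
      rw [hDdef, hXdef]
      calc ‖z - η‖ ≤ ‖z‖ + ‖η‖ := norm_sub_le _ _
        _ ≤ ‖z‖ + M := by linarith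
        _ ≤ 2*‖z‖ := by rw [← hXdef] at hzT ⊢; linarith
    clear hDdef hSdef hXdef hKb hzT hη z η
    constructor
    · intro hD1
      have h1 : D^p ≤ (2*X)^p := Real.rpow_le_rpow hD0 hDle hp0.le
      have h2 : (2*X)^p = B * X^p := by
        rw [hBdef, Real.mul_rpow (by norm_num) hX0.le]
      have h3 : 0 ≤ X^p := Real.rpow_nonneg hX0.le _
      have hBc : 16*B ≤ c := by
        rw [hcdef]; linarith [mul_nonneg (by linarith : (0:ℝ) ≤ 1+A) hu0.le]
      calc D^p ≤ B * X^p := h2 ▸ h1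
        _ ≤ B * (16*S^2) := mul_le_mul_of_nonneg_left hf2 hB0
        _ = (16*B) * S^2 := by ring
        _ ≤ c * S^2 := mul_le_mul_of_nonneg_right hBc (sq_nonneg S)
    · intro hD1
      have h1 : (1:ℝ) ≤ S^2 := by
        have := mul_le_mul hf1 hf1 zero_le_one hS0
        calc (1:ℝ) = 1*1 := by ring
          _ ≤ S*S := this
          _ = S^2 := by ring
      have h2 : D^2 ≤ 1 := pow_le_one₀ hD0 hD1
      have hc1 : 1 ≤ c := by
        rw [hcdef]; linarith [mul_nonneg (by linarith : (0:ℝ) ≤ 1+A) hu0.le, hB0]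
      calc D^2 ≤ 1 := h2
        _ ≤ S^2 := h1
        _ ≤ c * S^2 := le_mul_of_one_le_left (sq_nonneg S) hc1
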